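/- Let Ω ⊂ ℝⁿ be Lebesgue measurable, k ∈ ℕ, and f : Ω → ℝ measurable. Suppose that for every compact subset K ⊆ Ω and every ε > 0 there exists g ∈ C^k(ℝⁿ) with Lᵑ({x ∈ K : f(x) ≠ g(x)}) ≤ ε. Then for every ε > 0 there exists g ∈ C^k(ℝⁿ) with Lᵑ({x ∈ Ω : f(x) ≠ g(x)}) ≤ ε. -/

import Mathlib

open MeasureTheory Set
open scoped Manifold ENNReal

lemma my_bump {E : Type*} [NormedAddCommGroup E] [NormedSpace ℝ E] [FiniteDimensional ℝ E]
    {K U : Set E} (hK : IsCompact K) (hU : IsOpen U) (hKU : K ⊆ U) :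
    ∃ χ : E → ℝ, ContDiff ℝ ((⊤:ℕ∞):WithTop ℕ∞) χ ∧ Set.EqOn χ 1 K ∧ Function.support χ ⊆ U := by
  obtain ⟨f, hf0, hf1, -⟩ := exists_contMDiffMap_zero_one_of_isClosed (𝓘(ℝ, E)) (n := ⊤) hU.isClosed_compl
    hK.isClosed (disjoint_compl_left.mono_right hKU)
  refine ⟨f, ?_, hf1, ?_⟩
  · have := contMDiff_iff_contDiff.mp f.contMDiff
    exact this
  · intro x hx
    by_contra hxU
    exact hx (hf0 hxU)

theorem lusin_on_compacta_suffices (n k : ℕ) (Ω : Set (EuclideanSpace ℝ (Fin n)))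
    (hΩ : MeasurableSet Ω) (f : EuclideanSpace ℝ (Fin n) → ℝ) (hf : Measurable f)
    (h : ∀ K : Set (EuclideanSpace ℝ (Fin n)), K ⊆ Ω → IsCompact K →
      ∀ ε : ℝ, 0 < ε → ∃ g : EuclideanSpace ℝ (Fin n) → ℝ, ContDiff ℝ k g ∧
        volume {x ∈ K | f x ≠ g x} ≤ ENNReal.ofReal ε) :
    ∀ ε : ℝ, 0 < ε → ∃ g : EuclideanSpace ℝ (Fin n) → ℝ, ContDiff ℝ k g ∧
      volume {x ∈ Ω | f x ≠ g x} ≤ ENNReal.ofReal ε := by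
  intro ε hε
  rcases Nat.eq_zero_or_pos n with hn | hn
  · -- the space is a subsingleton, so Ω itself is compact
    subst hn
    haveI : Subsingleton (EuclideanSpace ℝ (Fin 0)) :=
      ⟨fun a b => PiLp.ext fun i => Fin.elim0 i⟩
    have hΩc : IsCompact Ω :=
      (Set.subsingleton_of_subsingleton (s := Ω)).finite.isCompact
    exact h Ω Set.Subset.rfl hΩc ε hε
  · haveI : Nonempty (Fin n) := ⟨⟨0, hn⟩⟩
    haveI : Nontrivial (EuclideanSpace ℝ (Fin n)) := inferInstance
    -- open annuli
    set U : ℕ → Set (EuclideanSpace ℝ (Fin n)) :=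
      fun m => Metric.ball 0 (m + 1) \ Metric.closedBall 0 m with hU
    have hUmem : ∀ m x, x ∈ U m ↔ (m : ℝ) < ‖x‖ ∧ ‖x‖ < m + 1 := by
      intro m x
      simp only [hU, Set.mem_diff, mem_ball_zero_iff, Metric.mem_closedBall,
        dist_zero_right, not_le]
      tauto
    have hUopen : ∀ m, IsOpen (U m) :=
      fun m => Metric.isOpen_ball.sdiff Metric.isClosed_closedBall
    have hUdisjAux : ∀ a b : ℕ, a < b → ∀ x, x ∈ U a → x ∈ U b → False := by
      intro a b hab x hxa hxb
      rw [hUmem] at hxa hxb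
      have hcast : (a : ℝ) + 1 ≤ b := by exact_mod_cast hab
      linarith [hxa.2, hxb.1]
    have hUdisj : ∀ m j, m ≠ j → ∀ x, x ∈ U m → x ∈ U j → False := by
      intro m j hmj x hxm hxj
      rcases lt_or_gt_of_ne hmj with hlt | hgt
      · exact hUdisjAux m j hlt x hxm hxj
      · exact hUdisjAux j m hgt x hxj hxm
    set A : ℕ → Set (EuclideanSpace ℝ (Fin n)) := fun m => Ω ∩ U m with hA
    have hA_meas : ∀ m, MeasurableSet (A m) :=
      fun m => hΩ.inter (hUopen m).measurableSet
    have hA_fin : ∀ m, volume (A m) ≠ ⊤ := by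
      intro m
      have hsub : A m ⊆ Metric.ball 0 (m + 1) := fun x hx => hx.2.1
      exact ((measure_mono hsub).trans_lt measure_ball_lt_top).ne
    -- compact pieces
    have hKex : ∀ m, ∃ K, K ⊆ A m ∧ IsCompact K ∧
        volume (A m \ K) < ENNReal.ofReal (ε / (4 * 2 ^ m)) := by
      intro m
      exact (hA_meas m).exists_isCompact_diff_lt (hA_fin m)
        (ENNReal.ofReal_pos.mpr (by positivity)).ne'
    choose K hKA hKc hKd using hKex
    -- approximations on each piece
    have hgex : ∀ m, ∃ g : EuclideanSpace ℝ (Fin n) → ℝ, ContDiff ℝ k g ∧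
        volume {x ∈ K m | f x ≠ g x} ≤ ENNReal.ofReal (ε / (4 * 2 ^ m)) := by
      intro m
      exact h (K m) ((hKA m).trans Set.inter_subset_left) (hKc m) _ (by positivity)
    choose g hg hgvol using hgex
    -- bump functions
    have hχex : ∀ m, ∃ χ : EuclideanSpace ℝ (Fin n) → ℝ,
        ContDiff ℝ ((⊤:ℕ∞):WithTop ℕ∞) χ ∧ Set.EqOn χ 1 (K m) ∧
        Function.support χ ⊆ U m := by
      intro m
      exact my_bump (hKc m) (hUopen m) ((hKA m).trans Set.inter_subset_right)
    choose χ hχ hχ1 hχs using hχex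
    set G : EuclideanSpace ℝ (Fin n) → ℝ := fun x => ∑' m, χ m x * g m x with hG
    have hzero : ∀ m x, x ∉ U m → χ m x * g m x = 0 := by
      intro m x hx
      have : χ m x = 0 := by
        by_contra hne
        exact hx (hχs m (Function.mem_support.mpr hne))
      rw [this, zero_mul]
    have hGK : ∀ m, ∀ x ∈ K m, G x = g m x := by
      intro m x hx
      have hxU : x ∈ U m := ((hKA m) hx).2
      have h1 : G x = χ m x * g m x := by
        refine tsum_eq_single m ?_
        intro j hj
        exact hzero j x (fun hxUj => hUdisj j m hj x hxUj hxU)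
      rw [h1, hχ1 m hx]
      simp
    -- smoothness of G
    have hGsmooth : ContDiff ℝ k G := by
      rw [contDiff_iff_contDiffAt]
      intro x₀
      set M : ℕ := ⌊‖x₀‖⌋₊ + 1 with hM
      have hx₀ : ‖x₀‖ < M := by
        have := Nat.lt_floor_add_one ‖x₀‖
        push_cast [hM]
        linarith
      have hEq : Set.EqOn G (fun x => ∑ m ∈ Finset.range M, χ m x * g m x)
          (Metric.ball (0 : EuclideanSpace ℝ (Fin n)) M) := by
        intro x hx
        refine tsum_eq_sum ?_
        intro m hm
        refine hzero m x ?_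
        intro hxU
        have h1 := ((hUmem m x).mp hxU).1
        have h2 : ‖x‖ < M := mem_ball_zero_iff.mp hx
        have h3 : (M : ℝ) ≤ m := by
          exact_mod_cast Nat.le_of_not_lt (fun hc => hm (Finset.mem_range.mpr hc))
        linarith
      have hsum : ContDiff ℝ k (fun x => ∑ m ∈ Finset.range M, χ m x * g m x) := by
        refine ContDiff.sum ?_
        intro m _
        exact ((hχ m).of_le (by exact_mod_cast le_top)).mul (hg m)
      refine hsum.contDiffAt.congr_of_eventuallyEq ?_
      exact Filter.eventuallyEq_of_mem
        (Metric.isOpen_ball.mem_nhds (mem_ball_zero_iff.mpr hx₀)) hEq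
    -- the uncovered part of Ω is null
    have hnull : volume (Ω \ ⋃ m, A m) = 0 := by
      have hsph : (Ω \ ⋃ m, A m) ⊆
          ⋃ m : ℕ, Metric.sphere (0 : EuclideanSpace ℝ (Fin n)) (m : ℝ) := by
        rintro x ⟨hxΩ, hxn⟩
        have hxm : x ∉ A ⌊‖x‖⌋₊ := fun hc => hxn (Set.mem_iUnion.mpr ⟨_, hc⟩)
        have hxU : x ∉ U ⌊‖x‖⌋₊ := fun hc => hxm ⟨hxΩ, hc⟩
        rw [hUmem] at hxU
        push_neg at hxU
        have h1 : ‖x‖ < (⌊‖x‖⌋₊ : ℝ) + 1 := Nat.lt_floor_add_one _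
        have h2 : (⌊‖x‖⌋₊ : ℝ) ≤ ‖x‖ := Nat.floor_le (norm_nonneg x)
        have h3 : ‖x‖ = (⌊‖x‖⌋₊ : ℝ) := by
          by_contra hne
          exact (not_le.mpr h1) (hxU (lt_of_le_of_ne h2 (Ne.symm hne)))
        exact Set.mem_iUnion.mpr ⟨⌊‖x‖⌋₊, mem_sphere_zero_iff_norm.mpr h3⟩
      exact measure_mono_null hsph
        (measure_iUnion_null fun m => Measure.addHaar_sphere volume 0 (m : ℝ))
    -- error set inclusion
    have hsub : {x ∈ Ω | f x ≠ G x} ⊆ (Ω \ ⋃ m, A m) ∪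
        ⋃ m, ((A m \ K m) ∪ {x ∈ K m | f x ≠ g m x}) := by
      rintro x ⟨hxΩ, hxne⟩
      by_cases hxA : x ∈ ⋃ m, A m
      · right
        obtain ⟨m, hm⟩ := Set.mem_iUnion.mp hxA
        refine Set.mem_iUnion.mpr ⟨m, ?_⟩
        by_cases hxK : x ∈ K m
        · refine Or.inr ⟨hxK, fun hfg => hxne ?_⟩
          rw [hGK m x hxK]
          exact hfg
        · exact Or.inl ⟨hm, hxK⟩
      · exact Or.inl ⟨hxΩ, hxA⟩
    refine ⟨G, hGsmooth, ?_⟩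
    have h12 : ENNReal.ofReal ((1:ℝ)/2) = 1/2 := by
      rw [ENNReal.ofReal_div_of_pos (by norm_num)]
      norm_num
    calc volume {x ∈ Ω | f x ≠ G x}
        ≤ volume (Ω \ ⋃ m, A m) +
            volume (⋃ m, ((A m \ K m) ∪ {x ∈ K m | f x ≠ g m x})) :=
          (measure_mono hsub).trans (measure_union_le _ _)
      _ = volume (⋃ m, ((A m \ K m) ∪ {x ∈ K m | f x ≠ g m x})) := by
          rw [hnull, zero_add]
      _ ≤ ∑' m, volume ((A m \ K m) ∪ {x ∈ K m | f x ≠ g m x}) := measure_iUnion_le _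
      _ ≤ ∑' m, (ENNReal.ofReal (ε / (4 * 2 ^ m)) + ENNReal.ofReal (ε / (4 * 2 ^ m))) :=
          ENNReal.tsum_le_tsum fun m =>
            (measure_union_le _ _).trans (add_le_add (hKd m).le (hgvol m))
      _ = ∑' m, ENNReal.ofReal (ε / 2 * (1/2) ^ m) := by
          refine tsum_congr fun m => ?_
          rw [← ENNReal.ofReal_add (by positivity) (by positivity)]
          congr 1
          field_simp
          rw [mul_assoc (4:ℝ), ← mul_pow, show (2:ℝ) * (1/2) = 1 by norm_num, one_pow]
          ring
      _ = ENNReal.ofReal (ε / 2) * ∑' m, ((1:ℝ≥0∞)/2) ^ m := by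
          rw [← ENNReal.tsum_mul_left]
          refine tsum_congr fun m => ?_
          rw [ENNReal.ofReal_mul (by positivity), ENNReal.ofReal_pow (by norm_num), h12]
      _ = ENNReal.ofReal (ε / 2) * 2 := by
          rw [ENNReal.tsum_geometric]
          norm_num [ENNReal.one_sub_inv_two]
      _ = ENNReal.ofReal ε := by
          rw [show (2:ℝ≥0∞) = ENNReal.ofReal 2 by simp,
            ← ENNReal.ofReal_mul (by positivity)]
          norm_num
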